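/- For all real t with −π/3 < ωt < π/3, the series ∑_{n=1}^∞ (−1)^{n−1}/((3n−1)(3n+1)) · cos(3nωt) converges to (√3 π/9) cos(ωt) − 1/2. -/

import Mathlib

open Real Complex intervalIntegral

noncomputable def myc (n : ℤ) : ℝ :=
  3 * Real.sqrt 3 * (-1) ^ n / (2 * π * (1 - 9 * (n : ℝ) ^ 2))

lemma my_J (a : ℝ) (ha : a ≠ 0) :
    (∫ x : ℝ in (-π)..π, Complex.exp (Complex.I * a * x)) =
      2 * Real.sin (a * π) / a := by
  have hc : (Complex.I * a) ≠ 0 := by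
    simp [Complex.I_ne_zero, Complex.ofReal_ne_zero, ha]
  rw [show (fun x : ℝ => Complex.exp (Complex.I * (a:ℂ) * (x:ℂ))) =
        fun x : ℝ => Complex.exp ((Complex.I * a) * (x:ℂ)) from rfl,
      integral_exp_mul_complex hc]
  have e1 : Complex.I * (a:ℂ) * (π:ℂ) = ((a * π : ℝ) : ℂ) * Complex.I := by
    push_cast; ring
  have e2 : Complex.I * (a:ℂ) * ((-π : ℝ):ℂ) = ((-(a * π) : ℝ) : ℂ) * Complex.I := by
    push_cast; ring
  rw [e1, e2, Complex.exp_mul_I, Complex.exp_mul_I]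
  have ha' : (a:ℂ) ≠ 0 := Complex.ofReal_ne_zero.mpr ha
  push_cast [Real.cos_neg, Real.sin_neg]
  field_simp
  simp only [Complex.cos_neg, Complex.sin_neg]; ring

lemma my_coeff (n : ℤ) :
    fourierCoeffOn (by linarith [Real.pi_pos] : (-π:ℝ) < -π + 2*π)
      (fun x : ℝ => Complex.cos ((x:ℂ)/3)) n = ((myc n : ℝ) : ℂ) := by
  rw [fourierCoeffOn_eq_integral]
  simp only [fourier_coe_apply]
  rw [show (-π + 2*π - -π : ℝ) = 2*π by ring]
  rw [show (-π + 2*π : ℝ) = π by ring]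
  have hπ : (π:ℝ) ≠ 0 := Real.pi_ne_zero
  have e1 : ((1:ℝ) - 3*n) ≠ 0 := by
    intro h
    have h' : ((3*n - 1 : ℤ):ℝ) = 0 := by push_cast; linarith
    have : (3*n - 1 : ℤ) = 0 := by exact_mod_cast h'
    omega
  have e2 : ((1:ℝ) + 3*n) ≠ 0 := by
    intro h
    have h' : ((3*n + 1 : ℤ):ℝ) = 0 := by push_cast; linarith
    have : (3*n + 1 : ℤ) = 0 := by exact_mod_cast h'
    omega
  set a1 : ℝ := 1/3 - n with ha1def
  set a2 : ℝ := -(1/3) - n with ha2def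
  have ha1 : a1 ≠ 0 := by rw [ha1def]; intro h; exact e1 (by linarith)
  have ha2 : a2 ≠ 0 := by rw [ha2def]; intro h; exact e2 (by linarith)
  have hd : (1 - 9*(n:ℝ)^2) ≠ 0 := by
    have : (1 - 9*(n:ℝ)^2) = (1 - 3*n) * (1 + 3*n) := by ring
    rw [this]; exact mul_ne_zero e1 e2
  have hint : (∫ x : ℝ in (-π)..π,
        Complex.exp (2 * ↑π * Complex.I * ↑(-n) * ↑x / ↑(2 * π)) • Complex.cos ((x:ℂ) / 3))
      = ((∫ x : ℝ in (-π)..π, Complex.exp (Complex.I * a1 * x))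
        + (∫ x : ℝ in (-π)..π, Complex.exp (Complex.I * a2 * x))) / 2 := by
    rw [← intervalIntegral.integral_add
      (Continuous.intervalIntegrable (by fun_prop) _ _)
      (Continuous.intervalIntegrable (by fun_prop) _ _),
      ← intervalIntegral.integral_div]
    apply intervalIntegral.integral_congr
    intro x hx
    simp only [smul_eq_mul]
    have hexp : (2 * (π:ℂ) * Complex.I * ((-n : ℤ):ℂ) * (x:ℂ) / ((2 * π : ℝ):ℂ))
        = Complex.I * ((-n : ℤ):ℂ) * x := by
      have : ((π:ℝ):ℂ) ≠ 0 := Complex.ofReal_ne_zero.mpr hπ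
      push_cast
      field_simp
    rw [hexp, Complex.cos]
    rw [show Complex.exp (Complex.I * ((-n:ℤ):ℂ) * x) *
          ((Complex.exp ((x:ℂ)/3 * Complex.I) + Complex.exp (-((x:ℂ)/3) * Complex.I))/2)
        = (Complex.exp (Complex.I * ((-n:ℤ):ℂ) * x + (x:ℂ)/3 * Complex.I)
          + Complex.exp (Complex.I * ((-n:ℤ):ℂ) * x + -((x:ℂ)/3) * Complex.I))/2 by
      rw [Complex.exp_add, Complex.exp_add]; ring]
    rw [show Complex.I * ((-n:ℤ):ℂ) * x + (x:ℂ)/3 * Complex.I = Complex.I * (a1:ℝ) * x by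
      rw [ha1def]; push_cast; ring]
    rw [show Complex.I * ((-n:ℤ):ℂ) * x + -((x:ℂ)/3) * Complex.I = Complex.I * (a2:ℝ) * x by
      rw [ha2def]; push_cast; ring]

  rw [hint, my_J a1 ha1, my_J a2 ha2]
  have hcos : Real.cos ((n:ℝ)*π) = (-1)^n := by
    simpa using Real.cos_int_mul_pi_sub 0 n
  have s1 : Real.sin (a1*π) = (-1)^n * (Real.sqrt 3/2) := by
    rw [show a1*π = π/3 - n*π by rw [ha1def]; ring, Real.sin_sub, Real.sin_int_mul_pi,
      Real.sin_pi_div_three, hcos]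
    ring
  have s2 : Real.sin (a2*π) = -((-1)^n * (Real.sqrt 3/2)) := by
    rw [show a2*π = -((n:ℝ)*π + π/3) by rw [ha2def]; ring, Real.sin_neg, Real.sin_add,
      Real.sin_int_mul_pi, hcos, Real.sin_pi_div_three]
    ring
  rw [s1, s2]
  have key : (1/(2*π)) * ((2*((-1:ℝ)^n*(Real.sqrt 3/2))/a1
      + 2*(-((-1:ℝ)^n*(Real.sqrt 3/2)))/a2)/2) = myc n := by
    have h1 : a1 = (1 - 3*(n:ℝ))/3 := by rw [ha1def]; ring
    have h2 : a2 = -((1 + 3*(n:ℝ))/3) := by rw [ha2def]; ring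
    have e3 : (-2 - (n:ℝ)*6) ≠ 0 := fun h => e2 (by linarith)
    rw [myc, h1, h2, show (1:ℝ) - 9*(n:ℝ)^2 = (1-3*n)*(1+3*n) by ring]
    field_simp
    ring
  rw [← key]
  rw [Complex.real_smul]
  push_cast
  ring

lemma my_summable : Summable (fun n : ℤ => ((myc n : ℝ) : ℂ)) := by
  have hπ := Real.pi_gt_three
  have hs : Summable (fun n : ℤ => (1:ℝ)/(n:ℝ)^2) := summable_one_div_int_pow.mpr one_lt_two
  refine Summable.of_norm_bounded_eventually hs ?_
  rw [Filter.eventually_cofinite]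
  apply Set.Finite.subset (Set.finite_singleton (0:ℤ))
  intro n hn
  simp only [Set.mem_setOf_eq, not_le] at hn
  simp only [Set.mem_singleton_iff]
  by_contra h0
  have hn2 : (1:ℝ) ≤ (n:ℝ)^2 := by
    have h1 : (1:ℤ) ≤ n^2 := by rcases lt_or_gt_of_ne h0 with h|h <;> nlinarith
    exact_mod_cast h1
  have hsq3 : Real.sqrt 3 ≤ 2 := by
    nlinarith [Real.sq_sqrt (by norm_num : (0:ℝ) ≤ 3), Real.sqrt_nonneg 3]
  have hden : (0:ℝ) < 9*(n:ℝ)^2 - 1 := by linarith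
  have habs : |myc n| = 3*Real.sqrt 3 / (2*π*(9*(n:ℝ)^2-1)) := by
    have hone : |(-1:ℝ)^n| = 1 := by
      rcases Int.even_or_odd n with he|ho
      · simp [he.neg_one_zpow]
      · simp [ho.neg_one_zpow]
    rw [myc, abs_div, abs_mul, hone, mul_one,
      _root_.abs_of_nonneg (by positivity : (0:ℝ) ≤ 3*Real.sqrt 3),
      show |2*π*(1-9*(n:ℝ)^2)| = 2*π*(9*(n:ℝ)^2-1) by
        rw [abs_mul, _root_.abs_of_nonneg (by positivity : (0:ℝ) ≤ 2*π),
          _root_.abs_of_nonpos (by linarith : (1:ℝ) - 9*(n:ℝ)^2 ≤ 0)]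
        ring]
  rw [show ‖((myc n:ℝ):ℂ)‖ = |myc n| from by simp [Complex.norm_real], habs] at hn
  have hle : 3*Real.sqrt 3 / (2*π*(9*(n:ℝ)^2-1)) ≤ 1/(n:ℝ)^2 := by
    rw [div_le_div_iff₀ (by positivity) (by linarith)]
    nlinarith [Real.sqrt_nonneg 3]
  exact absurd hn (not_lt.mpr hle)


lemma my_even (m : ℤ) : myc (-m) = myc m := by
  unfold myc
  rcases Int.even_or_odd m with h|h
  · rw [h.neg_one_zpow, (h.neg).neg_one_zpow]; push_cast; ring
  · rw [h.neg_one_zpow, (h.neg).neg_one_zpow]; push_cast; ring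

lemma my_re_term [hT : Fact (0 < 2*π)] (m : ℤ) (θ : ℝ) :
    ((((myc m):ℝ):ℂ) • fourier m (θ : AddCircle (2*π))
      + (((myc (-m)):ℝ):ℂ) • fourier (-m) (θ : AddCircle (2*π))).re
    = 2 * myc m * Real.cos (m*θ) := by
  have hπ : (π:ℝ) ≠ 0 := Real.pi_ne_zero
  have hπ' : ((π:ℝ):ℂ) ≠ 0 := Complex.ofReal_ne_zero.mpr hπ
  rw [fourier_coe_apply, fourier_coe_apply, my_even]
  rw [show 2*(π:ℂ)*Complex.I*((m:ℤ):ℂ)*(θ:ℂ)/((2*π:ℝ):ℂ) = (((m:ℝ)*θ:ℝ):ℂ)*Complex.I by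
    push_cast; field_simp]
  rw [show 2*(π:ℂ)*Complex.I*((-m:ℤ):ℂ)*(θ:ℂ)/((2*π:ℝ):ℂ) = ((-((m:ℝ)*θ):ℝ):ℂ)*Complex.I by
    push_cast; field_simp]
  simp only [smul_eq_mul, Complex.add_re, Complex.re_ofReal_mul,
    Complex.exp_ofReal_mul_I_re, Real.cos_neg]
  ring

theorem stmt_1 (ω t : ℝ) (h1 : -(π / 3) < ω * t) (h2 : ω * t < π / 3) :
    HasSum (fun n : ℕ =>
      (-1 : ℝ) ^ n / ((3 * (n + 1 : ℝ) - 1) * (3 * (n + 1 : ℝ) + 1)) *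
        Real.cos (3 * (n + 1 : ℝ) * (ω * t)))
      (Real.sqrt 3 * π / 9 * Real.cos (ω * t) - 1 / 2) := by
  have hπ := Real.pi_pos
  haveI : Fact (0 < 2*π) := ⟨by linarith⟩
  set x : ℝ := ω * t with hx
  set θ : ℝ := 3 * x with hθdef
  have hθmem : θ ∈ Set.Ico (-π) (-π + 2*π) :=
    ⟨by rw [hθdef]; linarith, by rw [hθdef]; linarith⟩
  have hcont : Continuous (AddCircle.liftIco (2*π) (-π) (fun y : ℝ => Complex.cos ((y:ℂ)/3))) := by
    apply AddCircle.liftIco_continuous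
    · rw [show ((-π:ℝ):ℂ)/3 = -((π:ℂ)/3) by push_cast; ring,
        show ((-π + 2*π:ℝ):ℂ)/3 = (π:ℂ)/3 by push_cast; ring, Complex.cos_neg]
    · exact (Complex.continuous_cos.comp (by fun_prop)).continuousOn
  set F : C(AddCircle (2*π), ℂ) := ⟨_, hcont⟩ with hF
  have hcoeffF : ∀ n, fourierCoeff (⇑F) n = ((myc n : ℝ):ℂ) := by
    intro n
    show fourierCoeff (AddCircle.liftIco (2*π) (-π) (fun y : ℝ => Complex.cos ((y:ℂ)/3))) n = _
    rw [fourierCoeff_liftIco_eq]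
    exact my_coeff n
  have hsummable : Summable (fourierCoeff (⇑F)) := by
    rw [show fourierCoeff (⇑F) = fun n => ((myc n : ℝ):ℂ) from funext hcoeffF]
    exact my_summable
  have key := has_pointwise_sum_fourier_series_of_summable hsummable (θ : AddCircle (2*π))
  have hFθ : F (θ : AddCircle (2*π)) = ((Real.cos x : ℝ):ℂ) := by
    show AddCircle.liftIco (2*π) (-π) (fun y : ℝ => Complex.cos ((y:ℂ)/3)) (θ : AddCircle (2*π))
        = ((Real.cos x : ℝ):ℂ)
    rw [AddCircle.liftIco_coe_apply hθmem,
      show ((θ:ℝ):ℂ)/3 = ((x:ℝ):ℂ) by rw [hθdef]; push_cast; ring]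
    exact (Complex.ofReal_cos x).symm
  rw [hFθ] at key
  simp_rw [hcoeffF] at key
  have key2 := key.nat_add_neg
  have key3 := (hasSum_nat_add_iff' 1).mpr key2
  have key4 := Complex.hasSum_re key3
  have hs3 : (0:ℝ) < Real.sqrt 3 := Real.sqrt_pos.mpr (by norm_num)
  have h33 : Real.sqrt 3 * Real.sqrt 3 = 3 := Real.mul_self_sqrt (by norm_num)
  convert key4.mul_left ((3*Real.sqrt 3/π)⁻¹) using 1
  · rfl
  · funext n
    rw [my_re_term]
    rw [show ((((n+1:ℕ)):ℤ):ℝ) * θ = 3*((n:ℝ)+1)*x by rw [hθdef]; push_cast; ring]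
    rw [myc]
    rw [show ((-1:ℝ)^(((n+1:ℕ)):ℤ)) = -(-1:ℝ)^n by
      rw [zpow_natCast, pow_succ]; ring]
    have hc0 : (0:ℝ) ≤ n := n.cast_nonneg
    have d1 : (3*((n:ℝ)+1)-1) ≠ 0 := by intro h; nlinarith
    have d2 : (3*((n:ℝ)+1)+1) ≠ 0 := by intro h; nlinarith
    have dd : 1 - 9*(((((n+1:ℕ)):ℤ):ℝ))^2 = -((3*((n:ℝ)+1)-1)*(3*((n:ℝ)+1)+1)) := by
      push_cast; ring
    rw [dd]
    field_simp
  · simp only [Finset.sum_range_one, Nat.cast_zero, neg_zero, fourier_zero, smul_eq_mul,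
      mul_one, Int.cast_zero, Complex.sub_re, Complex.add_re, Complex.ofReal_re]
    rw [show myc 0 = 3*Real.sqrt 3/(2*π) by rw [myc]; norm_num]
    field_simp
    linear_combination (6*π*Real.cos x) * h33
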